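/- Let k be a field, V and W two-dimensional k-vector spaces, and f : V → V, g : W → W linear endomorphisms with det f = 1 and det g = 1. If the Kronecker product f ⊗ g is the identity endomorphism of V ⊗[k] W, then there exists ε ∈ {1, −1} with f = ε·id_V and g = ε·id_W. -/

import Mathlib

open TensorProduct

section Aux

variable {k : Type*} [Field k]
    {V W : Type*} [AddCommGroup V] [Module k V] [AddCommGroup W] [Module k W]

/-- The bilinear pairing of dual functionals on a tensor product. -/
private noncomputable def auxPair (φ : Module.Dual k V) (ψ : Module.Dual k W) :
    V ⊗[k] W →ₗ[k] k :=
  (TensorProduct.lid k k).toLinearMap ∘ₗ TensorProduct.map φ ψ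

private lemma auxPair_tmul (φ : Module.Dual k V) (ψ : Module.Dual k W) (v : V) (w : W) :
    auxPair φ ψ (v ⊗ₜ[k] w) = φ v * ψ w := by
  simp [auxPair]

private lemma aux_tmul_ne_zero {v : V} {w : W} (hv : v ≠ 0) (hw : w ≠ 0) :
    v ⊗ₜ[k] w ≠ (0 : V ⊗[k] W) := by
  obtain ⟨φ, hφ⟩ : ∃ φ : Module.Dual k V, φ v ≠ 0 := by
    by_contra hco
    push_neg at hco
    exact hv ((Module.forall_dual_apply_eq_zero_iff k v).mp hco)
  obtain ⟨ψ, hψ⟩ : ∃ ψ : Module.Dual k W, ψ w ≠ 0 := by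
    by_contra hco
    push_neg at hco
    exact hw ((Module.forall_dual_apply_eq_zero_iff k w).mp hco)
  intro hz
  have := auxPair_tmul φ ψ v w
  rw [hz] at this
  simp only [map_zero] at this
  exact mul_ne_zero hφ hψ this.symm

/-- Key eigenvector step. -/
private lemma aux_eigen [FiniteDimensional k V] (hV : Module.finrank k V = 2)
    (f : Module.End k V) (g : Module.End k W)
    (hfg : ∀ v w, f v ⊗ₜ[k] g w = v ⊗ₜ[k] w)
    {v : V} (hv : v ≠ 0) {w : W} (hw : w ≠ 0) :
    ∃ c : k, f v = c • v := by
  by_contra hco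
  push_neg at hco
  have hgw : g w ≠ 0 := by
    intro h0
    have := hfg v w
    rw [h0, tmul_zero] at this
    exact aux_tmul_ne_zero hv hw this.symm
  -- v and f v are linearly independent
  have hind : LinearIndependent k ![v, f v] := by
    rw [LinearIndependent.pair_iff]
    intro s t hst
    by_cases ht : t = 0
    · subst ht
      simp only [zero_smul, add_zero] at hst
      exact ⟨(smul_eq_zero.mp hst).resolve_right hv, rfl⟩
    · exfalso
      apply hco (t⁻¹ * (-s))
      have hts : t • f v = (-s) • v := by linear_combination (norm := module) hst
      rw [mul_smul, ← hts, inv_smul_smul₀ ht]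
  have hcard : Fintype.card (Fin 2) = Module.finrank k V := by simp [hV]
  let B := basisOfLinearIndependentOfCardEqFinrank hind hcard
  have hB0 : B 0 = v := by simp [B, coe_basisOfLinearIndependentOfCardEqFinrank]
  have hB1 : B 1 = f v := by simp [B, coe_basisOfLinearIndependentOfCardEqFinrank]
  obtain ⟨ψ, hψ⟩ : ∃ ψ : Module.Dual k W, ψ (g w) ≠ 0 := by
    by_contra hco2
    push_neg at hco2
    exact hgw ((Module.forall_dual_apply_eq_zero_iff k (g w)).mp hco2)
  have h1 : auxPair (B.coord 1) ψ (f v ⊗ₜ[k] g w) = ψ (g w) := by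
    rw [auxPair_tmul, ← hB1, Module.Basis.coord_apply, Module.Basis.repr_self]
    simp
  have h2 : auxPair (B.coord 1) ψ (v ⊗ₜ[k] w) = 0 := by
    rw [auxPair_tmul, ← hB0, Module.Basis.coord_apply, Module.Basis.repr_self]
    simp [Finsupp.single_apply]
  rw [hfg v w, h2] at h1
  exact hψ h1.symm

/-- If every nonzero vector is an eigenvector, the map is scalar. -/
private lemma aux_scalar [FiniteDimensional k V] (hV : Module.finrank k V = 2)
    (f : Module.End k V) (hf : ∀ v : V, v ≠ 0 → ∃ c : k, f v = c • v) :
    ∃ a : k, f = a • (LinearMap.id : Module.End k V) := by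
  let B : Module.Basis (Fin 2) k V := Module.finBasisOfFinrankEq k V hV
  have hind := B.linearIndependent
  have h01 : B 0 + B 1 ≠ 0 := by
    intro h0
    have : (1 : k) • B 0 + (1 : k) • B 1 = 0 := by simpa using h0
    have h2 := Fintype.linearIndependent_iff.mp hind ![1, 1]
      (by simpa [Fin.sum_univ_two] using this)
    simpa using h2 0
  obtain ⟨a, ha⟩ := hf (B 0) (B.ne_zero 0)
  obtain ⟨b, hb⟩ := hf (B 1) (B.ne_zero 1)
  obtain ⟨c, hc⟩ := hf (B 0 + B 1) h01
  have hcomb : (a - c) • B 0 + (b - c) • B 1 = 0 := by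
    have : f (B 0 + B 1) = a • B 0 + b • B 1 := by rw [map_add, ha, hb]
    rw [hc, smul_add] at this
    linear_combination (norm := module) -this
  have hz := Fintype.linearIndependent_iff.mp hind ![a - c, b - c]
    (by simpa [Fin.sum_univ_two] using hcomb)
  have hac : a = c := by have := hz 0; simp at this; exact sub_eq_zero.mp this
  have hbc : b = c := by have := hz 1; simp at this; exact sub_eq_zero.mp this
  refine ⟨a, B.ext fun i => ?_⟩
  fin_cases i
  · simpa using ha
  · have : a = b := hac.trans hbc.symm
    rw [this]; simpa using hb

end Aux

/-- If `f` and `g` are determinant-one endomorphisms of two-dimensional vector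
spaces whose Kronecker product is the identity, then `f = ε·id` and `g = ε·id`
for a common sign `ε ∈ {1, -1}`. -/
theorem tensorProduct_map_eq_id_of_det_one
    {k : Type*} [Field k]
    {V W : Type*} [AddCommGroup V] [Module k V] [AddCommGroup W] [Module k W]
    [FiniteDimensional k V] [FiniteDimensional k W]
    (hV : Module.finrank k V = 2) (hW : Module.finrank k W = 2)
    (f : Module.End k V) (g : Module.End k W)
    (hf : LinearMap.det f = 1) (hg : LinearMap.det g = 1)
    (h : TensorProduct.map f g = (LinearMap.id : Module.End k (V ⊗[k] W))) :
    ∃ ε : k, (ε = 1 ∨ ε = -1) ∧ f = ε • (LinearMap.id : Module.End k V)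
      ∧ g = ε • (LinearMap.id : Module.End k W) := by
  have hfg : ∀ v w, f v ⊗ₜ[k] g w = v ⊗ₜ[k] w := fun v w => by
    have := LinearMap.congr_fun h (v ⊗ₜ[k] w)
    simpa using this
  have hgf : ∀ (w : W) (v : V), g w ⊗ₜ[k] f v = w ⊗ₜ[k] v := fun w v => by
    have := congrArg (TensorProduct.comm k V W) (hfg v w)
    simpa using this
  set v₀ : V := Module.finBasisOfFinrankEq k V hV 0 with hv₀def
  set w₀ : W := Module.finBasisOfFinrankEq k W hW 0 with hw₀def
  have hv₀ : v₀ ≠ 0 := (Module.finBasisOfFinrankEq k V hV).ne_zero 0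
  have hw₀ : w₀ ≠ 0 := (Module.finBasisOfFinrankEq k W hW).ne_zero 0
  obtain ⟨a, ha⟩ := aux_scalar hV f (fun v hv => aux_eigen hV f g hfg hv hw₀)
  obtain ⟨b, hb⟩ := aux_scalar hW g (fun w hw => aux_eigen hW g f hgf hw hv₀)
  have hav : f v₀ = a • v₀ := by rw [ha]; simp
  have hbw : g w₀ = b • w₀ := by rw [hb]; simp
  have hab : a * b = 1 := by
    have h1 := hfg v₀ w₀
    rw [hav, hbw, tmul_smul, ← smul_tmul', smul_smul, mul_comm b a] at h1
    by_contra hne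
    have : (a * b - 1) • (v₀ ⊗ₜ[k] w₀) = 0 := by
      rw [sub_smul, one_smul, h1, sub_self]
    exact aux_tmul_ne_zero hv₀ hw₀
      ((smul_eq_zero.mp this).resolve_left (sub_ne_zero.mpr hne))
  have ha2 : a * a = 1 := by
    rw [ha, LinearMap.det_smul, LinearMap.det_id, hV] at hf
    simpa [sq] using hf
  have hba : b = a := by
    have hane : a ≠ 0 := by rintro rfl; simp at ha2
    exact mul_left_cancel₀ hane (hab.trans ha2.symm)
  exact ⟨a, mul_self_eq_one_iff.mp ha2, ha, by rw [hb, hba]⟩
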